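/- Let n ≥ 1, λ ≥ 0, ζ ∈ [0,1], and set p = λ/(1+λ). Then the expected number of edges of a sample G from μ_{λ,ζ} satisfies E_{μ_{λ,ζ}} |G| ≥ C(n,2)·p·(1−p²)^n. -/

import Mathlib

open Filter
open scoped BigOperators symmDiff Classical

noncomputable section

/-- Number of edges of a labeled simple graph on `Fin n`. -/
def edgeCount {n : ℕ} (G : SimpleGraph (Fin n)) : ℕ := Nat.card G.edgeSet

/-- Number of triangles of a labeled simple graph on `Fin n`. -/
def triCount {n : ℕ} (G : SimpleGraph (Fin n)) : ℕ :=
  Nat.card {s : Finset (Fin n) // G.IsNClique 3 s}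

/-- Probability of the event `A` under the Erdős–Rényi random graph `G(n,p)`. -/
def erProb (n : ℕ) (p : ℝ) (A : Set (SimpleGraph (Fin n))) : ℝ :=
  ∑ G : SimpleGraph (Fin n),
    if G ∈ A then p ^ edgeCount G * (1 - p) ^ (n.choose 2 - edgeCount G) else 0

/-- Conditional probability `P_p(A | B)` for `G(n,p)`. -/
def erCondProb (n : ℕ) (p : ℝ) (A B : Set (SimpleGraph (Fin n))) : ℝ :=
  erProb n p (A ∩ B) / erProb n p B

/-- Probability of the event `A` under the uniform random graph `G(n,m)`. -/
def gnmProb (n m : ℕ) (A : Set (SimpleGraph (Fin n))) : ℝ :=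
  (Nat.card {G : SimpleGraph (Fin n) // edgeCount G = m ∧ G ∈ A} : ℝ) /
    ((n.choose 2).choose m : ℝ)

/-- Expected number of triangles of `G(n,m)`. -/
def gnmExpTri (n m : ℕ) : ℝ :=
  (∑ G : SimpleGraph (Fin n), if edgeCount G = m then (triCount G : ℝ) else 0) /
    ((n.choose 2).choose m : ℝ)

/-- Gibbs weight `λ^{|G|} (1-ζ)^{X(G)}`. -/
def gibbsWeight {n : ℕ} (lam zeta : ℝ) (G : SimpleGraph (Fin n)) : ℝ :=
  lam ^ edgeCount G * (1 - zeta) ^ triCount G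

/-- The partition function `Z(λ,ζ)`. -/
def Zfun (n : ℕ) (lam zeta : ℝ) : ℝ := ∑ G : SimpleGraph (Fin n), gibbsWeight lam zeta G

/-- Probability of the event `A` under the Gibbs measure `μ_{λ,ζ}`. -/
def gibbsProb (n : ℕ) (lam zeta : ℝ) (A : Set (SimpleGraph (Fin n))) : ℝ :=
  (∑ G : SimpleGraph (Fin n), if G ∈ A then gibbsWeight lam zeta G else 0) / Zfun n lam zeta

/-- Expectation of `f` under the Gibbs measure `μ_{λ,ζ}`. -/
def gibbsExp (n : ℕ) (lam zeta : ℝ) (f : SimpleGraph (Fin n) → ℝ) : ℝ :=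
  (∑ G : SimpleGraph (Fin n), f G * gibbsWeight lam zeta G) / Zfun n lam zeta

/-- Number of edges of `H` with both endpoints in `S`. -/
def edgesIn {V : Type*} (H : SimpleGraph V) (S : Finset V) : ℕ :=
  Nat.card {e : Sym2 V // e ∈ H.edgeSet ∧ ∀ v ∈ e, v ∈ S}

/-- Weight `λ^{|S|} (1-ζ)^{|E(S)|}` of the measure `ν_{H,λ,ζ}`. -/
def nuWeight {V : Type*} (H : SimpleGraph V) (lam zeta : ℝ) (S : Finset V) : ℝ :=
  lam ^ S.card * (1 - zeta) ^ edgesIn H S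

/-- The partition function `Ξ_H(λ,ζ)`. -/
def XiFun {V : Type*} [Fintype V] (H : SimpleGraph V) (lam zeta : ℝ) : ℝ :=
  ∑ S : Finset V, nuWeight H lam zeta S

/-- The probability of `S` under `ν_{H,λ,ζ}`. -/
def nuProb {V : Type*} [Fintype V] (H : SimpleGraph V) (lam zeta : ℝ) (S : Finset V) : ℝ :=
  nuWeight H lam zeta S / XiFun H lam zeta

/-- `W` is the Lambert-W function on `[0,∞)`: for `x ≥ 0`, `W x` is the unique `w ≥ 0`
with `w·e^w = x`. -/
def IsLambertW (W : ℝ → ℝ) : Prop :=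
  ∀ x : ℝ, 0 ≤ x → (0 ≤ W x ∧ W x * Real.exp (W x) = x ∧
    ∀ w : ℝ, 0 ≤ w → w * Real.exp w = x → w = W x)

/-- `η* = (W(2/e)/(2/e))^{3/2}`. -/
def etaStar (W : ℝ → ℝ) : ℝ := (W (2 / Real.exp 1) / (2 / Real.exp 1)) ^ ((3 : ℝ) / 2)

/-- The condition `c < c̄(η)` where `c̄(η) = 1/√(e(1−η/η*))` for `η < η*` and `+∞` otherwise. -/
def LtCbar (W : ℝ → ℝ) (c η : ℝ) : Prop :=
  η < etaStar W → c < 1 / Real.sqrt (Real.exp 1 * (1 - η / etaStar W))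

/-- The left-hand side of the equation defining `ζ(c,η)`, interpreted as `1` at `ζ = 0`. -/
def zetaLHS (W : ℝ → ℝ) (c zeta : ℝ) : ℝ :=
  (1 - zeta) * (if zeta = 0 then 1 else
    (W (2 * zeta * c ^ 2) / (2 * zeta * c ^ 2)) ^ ((3 : ℝ) / 2))



namespace GibbsAux
open SimpleGraph Finset

variable {n : ℕ}

def sg (a b : Fin n) : SimpleGraph (Fin n) := SimpleGraph.fromEdgeSet {s(a,b)}

lemma sg_adj {a b x y : Fin n} (hab : a ≠ b) :
    (sg a b).Adj x y ↔ (x = a ∧ y = b) ∨ (x = b ∧ y = a) := by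
  simp only [sg, fromEdgeSet_adj, Set.mem_singleton_iff, Sym2.eq_iff]
  constructor
  · rintro ⟨h, -⟩; exact h
  · intro h
    refine ⟨h, ?_⟩
    rcases h with ⟨rfl, rfl⟩ | ⟨rfl, rfl⟩
    · exact hab
    · exact hab.symm

lemma adj_sup_sg {H : SimpleGraph (Fin n)} {a b x y : Fin n} (hab : a ≠ b) :
    (H ⊔ sg a b).Adj x y ↔ H.Adj x y ∨ (x = a ∧ y = b) ∨ (x = b ∧ y = a) := by
  rw [sup_adj, sg_adj hab]

lemma edgeSet_sup_sg {H : SimpleGraph (Fin n)} {a b : Fin n} (hab : a ≠ b) :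
    (H ⊔ sg a b).edgeSet = insert s(a,b) H.edgeSet := by
  rw [edgeSet_sup, sg, edgeSet_fromEdgeSet]
  have : ({s(a,b)} : Set (Sym2 (Fin n))) \ {e | e.IsDiag} = {s(a,b)} := by
    ext e
    simp only [Set.mem_diff, Set.mem_singleton_iff, Set.mem_setOf_eq, and_iff_left_iff_imp]
    rintro rfl
    simpa using hab
  rw [show Sym2.diagSet = {e : Sym2 (Fin n) | e.IsDiag} from rfl, this, Set.union_singleton]

lemma edgeCount_eq_ncard (G : SimpleGraph (Fin n)) : edgeCount G = G.edgeSet.ncard :=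
  Nat.card_coe_set_eq _

lemma edgeCount_sup_sg {H : SimpleGraph (Fin n)} {a b : Fin n} (hab : a ≠ b)
    (h : ¬ H.Adj a b) : edgeCount (H ⊔ sg a b) = edgeCount H + 1 := by
  rw [edgeCount_eq_ncard, edgeCount_eq_ncard, edgeSet_sup_sg hab,
    Set.ncard_insert_of_notMem (fun hm => h ((SimpleGraph.mem_edgeSet _).1 hm)) (Set.toFinite _)]



def triSet (G : SimpleGraph (Fin n)) : Set (Finset (Fin n)) := {s | G.IsNClique 3 s}

lemma triCount_eq (G : SimpleGraph (Fin n)) : triCount G = (triSet G).ncard := by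
  rw [triSet, ← Nat.card_coe_set_eq]
  rfl

lemma triSet_mono {G G' : SimpleGraph (Fin n)} (h : G ≤ G') : triSet G ⊆ triSet G' :=
  fun _ hs => hs.mono h

lemma triCount_mono {G G' : SimpleGraph (Fin n)} (h : G ≤ G') : triCount G ≤ triCount G' := by
  rw [triCount_eq, triCount_eq]
  exact Set.ncard_le_ncard (triSet_mono h) (Set.toFinite _)

/-- failing pair extraction -/
lemma exists_bad_pair {G G' : SimpleGraph (Fin n)} {s : Finset (Fin n)}
    (hs : G'.IsNClique 3 s) (hns : ¬ G.IsNClique 3 s) :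
    ∃ x ∈ s, ∃ y ∈ s, x ≠ y ∧ ¬ G.Adj x y ∧ G'.Adj x y := by
  by_contra h
  push_neg at h
  apply hns
  refine ⟨fun x hx y hy hxy => ?_, hs.card_eq⟩
  have hx' : x ∈ s := hx
  have hy' : y ∈ s := hy
  have hadj : G'.Adj x y := hs.isClique hx hy hxy
  by_contra hG
  exact (h x hx' y hy' hxy hG) hadj

lemma not_mem_clique {G : SimpleGraph (Fin n)} {s : Finset (Fin n)} {i j : Fin n}
    (hs : G.IsNClique 3 s) (hi : i ∈ s) (hij : i ≠ j) (h : ¬ G.Adj i j) : j ∉ s :=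
  fun hj => h (hs.isClique hi hj hij)

lemma exists_third {s : Finset (Fin n)} {i j : Fin n} (hcard : s.card = 3)
    (hi : i ∈ s) (hj : j ∈ s) (hij : i ≠ j) : ∃ l ∈ s, l ≠ i ∧ l ≠ j := by
  have h1 : j ∈ s.erase i := Finset.mem_erase.2 ⟨hij.symm, hj⟩
  have h2 : ((s.erase i).erase j).Nonempty := by
    rw [← Finset.card_pos, Finset.card_erase_of_mem h1, Finset.card_erase_of_mem hi, hcard]
    norm_num
  obtain ⟨l, hl⟩ := h2
  rw [Finset.mem_erase, Finset.mem_erase] at hl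
  exact ⟨l, hl.2.2, hl.2.1, hl.1⟩


lemma triSet_diff_eq {H : SimpleGraph (Fin n)} {i j k : Fin n}
    (hij : i ≠ j) (hik : i ≠ k) (hjk : j ≠ k)
    (hHij : ¬ H.Adj i j) (hHik : ¬ H.Adj i k) :
    triSet (H ⊔ sg i k) \ triSet H = triSet (H ⊔ sg i k ⊔ sg j k) \ triSet (H ⊔ sg j k) := by
  ext s
  simp only [Set.mem_diff, triSet, Set.mem_setOf_eq]
  constructor
  · rintro ⟨hB, hA⟩
    obtain ⟨x, hx, y, hy, hxy, hnadj, hadj⟩ := exists_bad_pair hB hA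
    have his : i ∈ s ∧ k ∈ s := by
      rcases (adj_sup_sg hik).1 hadj with h | ⟨rfl, rfl⟩ | ⟨rfl, rfl⟩
      · exact absurd h hnadj
      · exact ⟨hx, hy⟩
      · exact ⟨hy, hx⟩
    refine ⟨hB.mono le_sup_left, fun hC => ?_⟩
    rcases (adj_sup_sg hjk).1 (hC.isClique his.1 his.2 hik) with h | ⟨h, -⟩ | ⟨h, -⟩
    · exact hHik h
    · exact hij h
    · exact hik h
  · rintro ⟨hD, hC⟩
    obtain ⟨x, hx, y, hy, hxy, hnadj, hadj⟩ := exists_bad_pair hD hC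
    have his : i ∈ s ∧ k ∈ s := by
      rcases (adj_sup_sg hjk).1 hadj with h | hcase
      · rcases (adj_sup_sg hik).1 h with hH | ⟨rfl, rfl⟩ | ⟨rfl, rfl⟩
        · exact absurd ((adj_sup_sg hjk).2 (Or.inl hH)) hnadj
        · exact ⟨hx, hy⟩
        · exact ⟨hy, hx⟩
      · exact absurd ((adj_sup_sg hjk).2 (Or.inr hcase)) hnadj
    have hjs : j ∉ s := by
      refine not_mem_clique hD his.1 hij ?_
      rw [adj_sup_sg hjk, adj_sup_sg hik]
      rintro ((h | ⟨-, h⟩ | ⟨h, -⟩) | ⟨h, -⟩ | ⟨h, -⟩)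
      · exact hHij h
      · exact hjk h
      · exact hik h
      · exact hij h
      · exact hik h
    refine ⟨⟨fun a ha b hb hab => ?_, hD.card_eq⟩,
      fun hA => hHik (hA.isClique his.1 his.2 hik)⟩
    rcases (adj_sup_sg hjk).1 (hD.isClique ha hb hab) with h | ⟨rfl, rfl⟩ | ⟨rfl, rfl⟩
    · exact h
    · exact absurd ha hjs
    · exact absurd hb hjs

lemma tri_identity {H : SimpleGraph (Fin n)} {i j k : Fin n}
    (hij : i ≠ j) (hik : i ≠ k) (hjk : j ≠ k)
    (hHij : ¬ H.Adj i j) (hHik : ¬ H.Adj i k) :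
    triCount (H ⊔ sg i k ⊔ sg j k) + triCount H
      = triCount (H ⊔ sg i k) + triCount (H ⊔ sg j k) := by
  have h1 := Set.ncard_diff_add_ncard_of_subset
    (triSet_mono (le_sup_left : H ≤ H ⊔ sg i k)) (Set.toFinite _)
  have h2 := Set.ncard_diff_add_ncard_of_subset
    (triSet_mono (sup_le ((le_sup_left : H ≤ H ⊔ sg i k).trans le_sup_left)
      le_sup_right : H ⊔ sg j k ≤ H ⊔ sg i k ⊔ sg j k)) (Set.toFinite _)
  rw [triSet_diff_eq hij hik hjk hHij hHik] at h1
  rw [triCount_eq, triCount_eq, triCount_eq, triCount_eq]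
  omega

lemma triCount_sup_of_no_common {H : SimpleGraph (Fin n)} {i j : Fin n}
    (hij : i ≠ j) (hHij : ¬ H.Adj i j)
    (hNC : ∀ l, ¬ (H.Adj i l ∧ H.Adj j l)) :
    triCount (H ⊔ sg i j) = triCount H := by
  rw [triCount_eq, triCount_eq]
  congr 1
  apply Set.Subset.antisymm ?_ (triSet_mono le_sup_left)
  intro s hs
  by_contra hA
  obtain ⟨x, hx, y, hy, hxy, hnadj, hadj⟩ := exists_bad_pair hs hA
  have his : i ∈ s ∧ j ∈ s := by
    rcases (adj_sup_sg hij).1 hadj with h | ⟨rfl, rfl⟩ | ⟨rfl, rfl⟩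
    · exact absurd h hnadj
    · exact ⟨hx, hy⟩
    · exact ⟨hy, hx⟩
  obtain ⟨l, hls, hli, hlj⟩ := exists_third hs.card_eq his.1 his.2 hij
  have h1 : H.Adj i l := by
    rcases (adj_sup_sg hij).1 (hs.isClique his.1 hls (Ne.symm hli)) with h | ⟨-, h⟩ | ⟨h, -⟩
    · exact h
    · exact absurd h hlj
    · exact absurd h hij
  have h2 : H.Adj j l := by
    rcases (adj_sup_sg hij).1 (hs.isClique his.2 hls (Ne.symm hlj)) with h | ⟨h, -⟩ | ⟨-, h⟩
    · exact h
    · exact absurd h.symm hij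
    · exact absurd h hli
  exact hNC l ⟨h1, h2⟩


lemma sup_sg_sdiff {H : SimpleGraph (Fin n)} {a b : Fin n} (hab : a ≠ b) (h : ¬ H.Adj a b) :
    (H ⊔ sg a b) \ sg a b = H := by
  ext x y
  rw [sdiff_adj, adj_sup_sg hab, sg_adj hab]
  constructor
  · rintro ⟨h1 | h2, hn⟩
    · exact h1
    · exact absurd h2 hn
  · intro hH
    refine ⟨Or.inl hH, ?_⟩
    rintro (⟨rfl, rfl⟩ | ⟨rfl, rfl⟩)
    · exact h hH
    · exact h hH.symm

lemma sdiff_sup_sg {H : SimpleGraph (Fin n)} {a b : Fin n} (hab : a ≠ b) (h : H.Adj a b) :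
    (H \ sg a b) ⊔ sg a b = H := by
  ext x y
  rw [sup_adj, sdiff_adj, sg_adj hab]
  constructor
  · rintro (⟨h1, -⟩ | ⟨rfl, rfl⟩ | ⟨rfl, rfl⟩)
    · exact h1
    · exact h
    · exact h.symm
  · intro hH
    by_cases hp : (x = a ∧ y = b) ∨ (x = b ∧ y = a)
    · exact Or.inr hp
    · exact Or.inl ⟨hH, hp⟩

lemma not_adj_sdiff_sg (H : SimpleGraph (Fin n)) {a b : Fin n} (hab : a ≠ b) :
    ¬ (H \ sg a b).Adj a b := by
  rw [sdiff_adj, sg_adj hab]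
  rintro ⟨-, hn⟩
  exact hn (Or.inl ⟨rfl, rfl⟩)

lemma split_sum {a b : Fin n} (hab : a ≠ b) (F : SimpleGraph (Fin n) → ℝ) :
    ∑ H : SimpleGraph (Fin n), F H
      = ∑ H : SimpleGraph (Fin n),
          (if H.Adj a b then 0 else F H + F (H ⊔ sg a b)) := by
  have hR : ∑ H : SimpleGraph (Fin n), (if H.Adj a b then 0 else F H + F (H ⊔ sg a b))
      = ∑ H ∈ Finset.univ.filter (fun H => ¬ H.Adj a b), (F H + F (H ⊔ sg a b)) := by
    rw [Finset.sum_filter]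
    apply Finset.sum_congr rfl
    intro H _
    by_cases h : H.Adj a b <;> simp [h]
  have hL : ∑ H ∈ Finset.univ.filter (fun H => H.Adj a b), F H
      = ∑ H ∈ Finset.univ.filter (fun H => ¬ H.Adj a b), F (H ⊔ sg a b) := by
    refine Finset.sum_nbij' (fun H => H \ sg a b) (fun H => H ⊔ sg a b) ?_ ?_ ?_ ?_ ?_
    · intro H hH
      simp only [Finset.mem_filter, Finset.mem_univ, true_and] at hH ⊢
      exact not_adj_sdiff_sg H hab
    · intro H hH
      simp only [Finset.mem_filter, Finset.mem_univ, true_and] at hH ⊢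
      rw [adj_sup_sg hab]
      exact Or.inr (Or.inl ⟨rfl, rfl⟩)
    · intro H hH
      simp only [Finset.mem_filter, Finset.mem_univ, true_and] at hH
      exact sdiff_sup_sg hab hH
    · intro H hH
      simp only [Finset.mem_filter, Finset.mem_univ, true_and] at hH
      exact sup_sg_sdiff hab hH
    · intro H hH
      simp only [Finset.mem_filter, Finset.mem_univ, true_and] at hH
      rw [sdiff_sup_sg hab hH]
  rw [hR, Finset.sum_add_distrib, ← hL,
    ← Finset.sum_filter_add_sum_filter_not Finset.univ (fun H => H.Adj a b) F]
  ring


lemma core' {lam W0 W1 W2 W3 : ℝ} (hl : 0 ≤ lam)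
    (h0 : 0 ≤ W0) (h1 : 0 ≤ W1) (h2 : 0 ≤ W2) (h3 : 0 ≤ W3)
    (hW1 : W1 ≤ lam * W0) (hW2 : W2 ≤ lam * W0)
    (hW31 : W3 ≤ lam * W1) (hW32 : W3 ≤ lam * W2)
    (hprod : W3 * W0 = W1 * W2) :
    (1 + 2 * lam) / (1 + lam) ^ 2 * (W0 + W1 + W2 + W3) ≤ W0 + W1 + W2 := by
  have hden : (0:ℝ) < (1 + lam) ^ 2 := by positivity
  rw [div_mul_eq_mul_div, div_le_iff₀ hden]
  have hA : W3 ≤ lam ^ 2 * W0 := by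
    rcases eq_or_lt_of_le h0 with h | h
    · nlinarith [mul_le_mul hW31 hW32 h3 (mul_nonneg hl h1)]
    · nlinarith [mul_le_mul hW1 hW2 h2 (mul_nonneg hl h0)]
  have hB : lam * W3 ≤ lam ^ 2 * W1 := by nlinarith
  have hC : lam * W3 ≤ lam ^ 2 * W2 := by nlinarith
  nlinarith

lemma w_mono {lam c : ℝ} (hl : 0 ≤ lam) (hc0 : 0 ≤ c) (hc1 : c ≤ 1) {e1 t1 t2 : ℕ}
    (ht : t1 ≤ t2) :
    lam ^ (e1 + 1) * c ^ t2 ≤ lam * (lam ^ e1 * c ^ t1) := by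
  have hp : c ^ t2 ≤ c ^ t1 := pow_le_pow_of_le_one hc0 hc1 ht
  have h1 : (0:ℝ) ≤ lam ^ e1 := pow_nonneg hl _
  calc lam ^ (e1+1) * c ^ t2 = (lam * lam ^ e1) * c ^ t2 := by rw [pow_succ]; ring
    _ ≤ (lam * lam ^ e1) * c ^ t1 := mul_le_mul_of_nonneg_left hp (mul_nonneg hl h1)
    _ = lam * (lam ^ e1 * c ^ t1) := by ring


lemma adj_sup_sg_other {H : SimpleGraph (Fin n)} {a b x y : Fin n} (hab : a ≠ b)
    (h1 : ¬(x = a ∧ y = b)) (h2 : ¬(x = b ∧ y = a)) :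
    (H ⊔ sg a b).Adj x y ↔ H.Adj x y := by
  rw [adj_sup_sg hab]
  constructor
  · rintro (h | h | h)
    · exact h
    · exact absurd h h1
    · exact absurd h h2
  · exact Or.inl

lemma split_sum2 {i j k : Fin n} (hij : i ≠ j) (hik : i ≠ k) (hjk : j ≠ k)
    (F : SimpleGraph (Fin n) → ℝ) :
    ∑ H : SimpleGraph (Fin n), F H
      = ∑ H : SimpleGraph (Fin n),
          (if H.Adj i k ∨ H.Adj j k then 0 else
            (F H + F (H ⊔ sg j k)) + (F (H ⊔ sg i k) + F (H ⊔ sg i k ⊔ sg j k))) := by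
  rw [split_sum hjk F,
    split_sum hik (fun H => if H.Adj j k then 0 else F H + F (H ⊔ sg j k))]
  apply Finset.sum_congr rfl
  intro H _
  by_cases h1 : H.Adj i k
  · simp [h1]
  by_cases h2 : H.Adj j k
  · have h3 : (H ⊔ sg i k).Adj j k := (adj_sup_sg hik).2 (Or.inl h2)
    simp [h1, h2, h3]
  · have h3 : ¬ (H ⊔ sg i k).Adj j k := by
      rw [adj_sup_sg hik]
      rintro (h | ⟨h, -⟩ | ⟨h, -⟩)
      · exact h2 h
      · exact hij h.symm
      · exact hjk h
    simp [h1, h2, h3]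


def wt (lam c : ℝ) (H : SimpleGraph (Fin n)) : ℝ := lam ^ edgeCount H * c ^ triCount H

lemma wt_nonneg {lam c : ℝ} (hl : 0 ≤ lam) (hc : 0 ≤ c) (H : SimpleGraph (Fin n)) :
    0 ≤ wt lam c H := mul_nonneg (pow_nonneg hl _) (pow_nonneg hc _)

lemma wt_prod {lam c : ℝ} {e t0 t1 t2 t3 : ℕ} (hsum : t3 + t0 = t1 + t2) :
    (lam ^ (e+1+1) * c ^ t3) * (lam ^ e * c ^ t0)
      = (lam ^ (e+1) * c ^ t1) * (lam ^ (e+1) * c ^ t2) := by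
  have h1 : lam ^ (e+1+1) * lam ^ e = lam ^ (e+1) * lam ^ (e+1) := by
    rw [← pow_add, ← pow_add]
    congr 1
    omega
  have h2 : c ^ t3 * c ^ t0 = c ^ t1 * c ^ t2 := by rw [← pow_add, ← pow_add, hsum]
  calc (lam ^ (e+1+1) * c ^ t3) * (lam ^ e * c ^ t0)
      = (lam ^ (e+1+1) * lam ^ e) * (c ^ t3 * c ^ t0) := by ring
    _ = (lam ^ (e+1) * lam ^ (e+1)) * (c ^ t1 * c ^ t2) := by rw [h1, h2]
    _ = (lam ^ (e+1) * c ^ t1) * (lam ^ (e+1) * c ^ t2) := by ring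

lemma cond_sup_invariant {i j k a : Fin n} {K' : Finset (Fin n)}
    (hik : i ≠ k) (hjk : j ≠ k) (hkK : k ∉ K') (hak : a ≠ k)
    (G : SimpleGraph (Fin n)) :
    (¬(G ⊔ sg a k).Adj i j ∧ ∀ l ∈ K', ¬((G ⊔ sg a k).Adj i l ∧ (G ⊔ sg a k).Adj j l))
      ↔ (¬G.Adj i j ∧ ∀ l ∈ K', ¬(G.Adj i l ∧ G.Adj j l)) := by
  have e1 : (G ⊔ sg a k).Adj i j ↔ G.Adj i j :=
    adj_sup_sg_other hak (fun h => hjk h.2) (fun h => hik h.1)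
  refine and_congr (not_congr e1) (forall_congr' fun l => imp_congr_right fun hl => ?_)
  have hlk : l ≠ k := fun h => hkK (h ▸ hl)
  have e2 : (G ⊔ sg a k).Adj i l ↔ G.Adj i l :=
    adj_sup_sg_other hak (fun h => hlk h.2) (fun h => hik h.1)
  have e3 : (G ⊔ sg a k).Adj j l ↔ G.Adj j l :=
    adj_sup_sg_other hak (fun h => hlk h.2) (fun h => hjk h.1)
  rw [e2, e3]

lemma step_ineq {lam c : ℝ} (hl : 0 ≤ lam) (hc0 : 0 ≤ c) (hc1 : c ≤ 1)
    {i j : Fin n} (hij : i ≠ j) (k : Fin n) (K' : Finset (Fin n)) (hkK : k ∉ K') :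
    (1 + 2*lam)/(1+lam)^2 *
      ∑ H : SimpleGraph (Fin n),
        (if ¬ H.Adj i j ∧ ∀ l ∈ K', ¬(H.Adj i l ∧ H.Adj j l) then wt lam c H else 0)
    ≤ ∑ H : SimpleGraph (Fin n),
        (if ¬ H.Adj i j ∧ ∀ l ∈ insert k K', ¬(H.Adj i l ∧ H.Adj j l) then wt lam c H
          else 0) := by
  have hr0 : 0 ≤ (1+2*lam)/(1+lam)^2 := by positivity
  by_cases hki : k = i ∨ k = j
  · have heq : ∀ H : SimpleGraph (Fin n),
        (if ¬ H.Adj i j ∧ ∀ l ∈ insert k K', ¬(H.Adj i l ∧ H.Adj j l) then wt lam c H else 0)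
          = (if ¬ H.Adj i j ∧ ∀ l ∈ K', ¬(H.Adj i l ∧ H.Adj j l) then wt lam c H else 0) := by
      intro H
      refine if_congr (and_congr_right fun _ => ?_) rfl rfl
      rw [Finset.forall_mem_insert]
      have hkk : ¬(H.Adj i k ∧ H.Adj j k) := by
        rcases hki with rfl | rfl
        · rintro ⟨h, -⟩; exact H.irrefl h
        · rintro ⟨-, h⟩; exact H.irrefl h
      exact and_iff_right hkk
    rw [Finset.sum_congr rfl (fun H _ => heq H)]
    have hr1 : (1+2*lam)/(1+lam)^2 ≤ 1 := by
      rw [div_le_one (by positivity)]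
      nlinarith
    have hS : 0 ≤ ∑ H : SimpleGraph (Fin n),
        (if ¬ H.Adj i j ∧ ∀ l ∈ K', ¬(H.Adj i l ∧ H.Adj j l) then wt lam c H else 0) := by
      apply Finset.sum_nonneg
      intro H _
      split
      · exact wt_nonneg hl hc0 H
      · exact le_refl 0
    nlinarith [mul_le_mul_of_nonneg_right hr1 hS]
  · push_neg at hki
    have hik : i ≠ k := fun h => hki.1 h.symm
    have hjk : j ≠ k := fun h => hki.2 h.symm
    set F0 : SimpleGraph (Fin n) → ℝ := fun H =>
      if ¬ H.Adj i j ∧ ∀ l ∈ K', ¬(H.Adj i l ∧ H.Adj j l) then wt lam c H else 0 with hF0def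
    have hF1eq : ∀ H : SimpleGraph (Fin n),
        (if ¬ H.Adj i j ∧ ∀ l ∈ insert k K', ¬(H.Adj i l ∧ H.Adj j l) then wt lam c H else 0)
          = (if H.Adj i k ∧ H.Adj j k then 0 else F0 H) := by
      intro H
      by_cases hb : H.Adj i k ∧ H.Adj j k
      · rw [if_pos hb, if_neg]
        rintro ⟨-, hall⟩
        exact (hall k (Finset.mem_insert_self _ _)) hb
      · rw [if_neg hb, hF0def]
        refine if_congr (and_congr_right fun _ => ?_) rfl rfl
        rw [Finset.forall_mem_insert]
        exact and_iff_right hb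
    rw [Finset.sum_congr rfl (fun H _ => hF1eq H)]
    rw [split_sum2 hij hik hjk F0,
      split_sum2 hij hik hjk (fun H => if H.Adj i k ∧ H.Adj j k then 0 else F0 H),
      Finset.mul_sum]
    apply Finset.sum_le_sum
    intro H _
    by_cases hcnd : H.Adj i k ∨ H.Adj j k
    · rw [if_pos hcnd, if_pos hcnd, mul_zero]
    · rw [if_neg hcnd, if_neg hcnd]
      push_neg at hcnd
      obtain ⟨hik', hjk'⟩ := hcnd
      have hAdjH1jk : (H ⊔ sg i k).Adj j k ↔ H.Adj j k :=
        adj_sup_sg_other hik (fun h => hij h.1.symm) (fun h => hjk h.1)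
      have hAdjH2ik : (H ⊔ sg j k).Adj i k ↔ H.Adj i k :=
        adj_sup_sg_other hjk (fun h => hij h.1) (fun h => hik h.1)
      have hb0 : ¬(H.Adj i k ∧ H.Adj j k) := fun h => hik' h.1
      have hb1 : ¬((H ⊔ sg i k).Adj i k ∧ (H ⊔ sg i k).Adj j k) :=
        fun h => hjk' (hAdjH1jk.1 h.2)
      have hb2 : ¬((H ⊔ sg j k).Adj i k ∧ (H ⊔ sg j k).Adj j k) :=
        fun h => hik' (hAdjH2ik.1 h.1)
      have hb3 : (H ⊔ sg i k ⊔ sg j k).Adj i k ∧ (H ⊔ sg i k ⊔ sg j k).Adj j k :=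
        ⟨(adj_sup_sg hjk).2 (Or.inl ((adj_sup_sg hik).2 (Or.inr (Or.inl ⟨rfl, rfl⟩)))),
         (adj_sup_sg hjk).2 (Or.inr (Or.inl ⟨rfl, rfl⟩))⟩
      rw [if_neg hb0, if_neg hb2, if_neg hb1, if_pos hb3]
      have hC1 := cond_sup_invariant hik hjk hkK hik H
      have hC2 := cond_sup_invariant hik hjk hkK hjk H
      have hC3 := (cond_sup_invariant hik hjk hkK hjk (H ⊔ sg i k)).trans hC1
      by_cases hP : ¬ H.Adj i j ∧ ∀ l ∈ K', ¬(H.Adj i l ∧ H.Adj j l)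
      · rw [hF0def]
        simp only
        rw [if_pos hP, if_pos (hC1.2 hP), if_pos (hC2.2 hP), if_pos (hC3.2 hP)]
        have hjk'' : ¬ (H ⊔ sg i k).Adj j k := fun h => hjk' (hAdjH1jk.1 h)
        have he1 : edgeCount (H ⊔ sg i k) = edgeCount H + 1 := edgeCount_sup_sg hik hik'
        have he2 : edgeCount (H ⊔ sg j k) = edgeCount H + 1 := edgeCount_sup_sg hjk hjk'
        have he3 : edgeCount (H ⊔ sg i k ⊔ sg j k) = edgeCount H + 1 + 1 := by
          rw [edgeCount_sup_sg hjk hjk'', he1]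
        have ht1 : triCount H ≤ triCount (H ⊔ sg i k) := triCount_mono le_sup_left
        have ht2 : triCount H ≤ triCount (H ⊔ sg j k) := triCount_mono le_sup_left
        have ht31 : triCount (H ⊔ sg i k) ≤ triCount (H ⊔ sg i k ⊔ sg j k) :=
          triCount_mono le_sup_left
        have ht32 : triCount (H ⊔ sg j k) ≤ triCount (H ⊔ sg i k ⊔ sg j k) :=
          triCount_mono (sup_le ((le_sup_left : H ≤ H ⊔ sg i k).trans le_sup_left) le_sup_right)
        have hsum : triCount (H ⊔ sg i k ⊔ sg j k) + triCount H
            = triCount (H ⊔ sg i k) + triCount (H ⊔ sg j k) := tri_identity hij hik hjk hP.1 hik'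
        have hW1 : wt lam c (H ⊔ sg i k) ≤ lam * wt lam c H := by
          rw [wt, wt, he1]; exact w_mono hl hc0 hc1 ht1
        have hW2 : wt lam c (H ⊔ sg j k) ≤ lam * wt lam c H := by
          rw [wt, wt, he2]; exact w_mono hl hc0 hc1 ht2
        have hW31 : wt lam c (H ⊔ sg i k ⊔ sg j k) ≤ lam * wt lam c (H ⊔ sg i k) := by
          rw [wt, wt, he3, he1]; exact w_mono hl hc0 hc1 ht31
        have hW32 : wt lam c (H ⊔ sg i k ⊔ sg j k) ≤ lam * wt lam c (H ⊔ sg j k) := by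
          rw [wt, wt, he3, he2]; exact w_mono hl hc0 hc1 ht32
        have hprod : wt lam c (H ⊔ sg i k ⊔ sg j k) * wt lam c H
            = wt lam c (H ⊔ sg i k) * wt lam c (H ⊔ sg j k) := by
          rw [wt, wt, wt, wt, he1, he2, he3]
          exact wt_prod hsum
        have := core' hl (wt_nonneg hl hc0 H) (wt_nonneg hl hc0 _) (wt_nonneg hl hc0 _)
          (wt_nonneg hl hc0 _) hW1 hW2 hW31 hW32 hprod
        linarith
      · rw [hF0def]
        simp only
        rw [if_neg hP, if_neg (fun h => hP (hC1.1 h)), if_neg (fun h => hP (hC2.1 h)),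
          if_neg (fun h => hP (hC3.1 h))]
        simp


lemma chain_ineq {lam c : ℝ} (hl : 0 ≤ lam) (hc0 : 0 ≤ c) (hc1 : c ≤ 1)
    {i j : Fin n} (hij : i ≠ j) (K : Finset (Fin n)) :
    ((1 + 2*lam)/(1+lam)^2) ^ K.card *
      ∑ H : SimpleGraph (Fin n), (if ¬ H.Adj i j then wt lam c H else 0)
    ≤ ∑ H : SimpleGraph (Fin n),
        (if ¬ H.Adj i j ∧ ∀ l ∈ K, ¬(H.Adj i l ∧ H.Adj j l) then wt lam c H else 0) := by
  classical
  induction K using Finset.induction_on with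
  | empty =>
    rw [Finset.card_empty, pow_zero, one_mul]
    refine le_of_eq (Finset.sum_congr rfl fun H _ => ?_)
    refine (if_congr ?_ rfl rfl)
    simp
  | insert a K ha ih =>
    rw [Finset.card_insert_of_notMem ha, pow_succ]
    have hr0 : 0 ≤ (1 + 2*lam)/(1+lam)^2 := by positivity
    calc ((1 + 2*lam)/(1+lam)^2) ^ K.card * ((1 + 2*lam)/(1+lam)^2) *
          ∑ H : SimpleGraph (Fin n), (if ¬ H.Adj i j then wt lam c H else 0)
        = ((1 + 2*lam)/(1+lam)^2) *
            (((1 + 2*lam)/(1+lam)^2) ^ K.card *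
              ∑ H : SimpleGraph (Fin n), (if ¬ H.Adj i j then wt lam c H else 0)) := by ring
      _ ≤ ((1 + 2*lam)/(1+lam)^2) *
            ∑ H : SimpleGraph (Fin n),
              (if ¬ H.Adj i j ∧ ∀ l ∈ K, ¬(H.Adj i l ∧ H.Adj j l) then wt lam c H else 0) :=
          mul_le_mul_of_nonneg_left ih hr0
      _ ≤ _ := step_ineq hl hc0 hc1 hij a K ha

lemma pair_bound {lam c : ℝ} (hl : 0 ≤ lam) (hc0 : 0 ≤ c) (hc1 : c ≤ 1)
    {i j : Fin n} (hij : i ≠ j) :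
    lam/(1+lam) * ((1 + 2*lam)/(1+lam)^2) ^ n *
        (∑ H : SimpleGraph (Fin n), wt lam c H)
      ≤ ∑ H : SimpleGraph (Fin n), (if H.Adj i j then wt lam c H else 0) := by
  classical
  have h1p : (0:ℝ) < 1 + lam := by linarith
  have hsplitA : (∑ H : SimpleGraph (Fin n), (if H.Adj i j then wt lam c H else 0))
      = ∑ H : SimpleGraph (Fin n), (if H.Adj i j then 0 else wt lam c (H ⊔ sg i j)) := by
    rw [split_sum hij (fun H => if H.Adj i j then wt lam c H else 0)]
    refine Finset.sum_congr rfl fun H _ => ?_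
    by_cases h : H.Adj i j
    · simp [h]
    · have hadj : (H ⊔ sg i j).Adj i j := (adj_sup_sg hij).2 (Or.inr (Or.inl ⟨rfl, rfl⟩))
      simp [h, hadj]
  have hup : ∀ H : SimpleGraph (Fin n), ¬ H.Adj i j →
      wt lam c (H ⊔ sg i j) ≤ lam * wt lam c H := by
    intro H h
    rw [wt, wt, edgeCount_sup_sg hij h]
    exact w_mono hl hc0 hc1 (triCount_mono le_sup_left)
  have hZle : (∑ H : SimpleGraph (Fin n), wt lam c H)
      ≤ (1 + lam) * ∑ H : SimpleGraph (Fin n), (if H.Adj i j then 0 else wt lam c H) := by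
    rw [split_sum hij (wt lam c), Finset.mul_sum]
    apply Finset.sum_le_sum
    intro H _
    by_cases h : H.Adj i j
    · simp [h]
    · rw [if_neg h, if_neg h]
      calc wt lam c H + wt lam c (H ⊔ sg i j) ≤ wt lam c H + lam * wt lam c H := by
            linarith [hup H h]
        _ = (1 + lam) * wt lam c H := by ring
  have hAge : lam * ∑ H : SimpleGraph (Fin n),
        (if ¬ H.Adj i j ∧ ∀ l, ¬(H.Adj i l ∧ H.Adj j l) then wt lam c H else 0)
      ≤ ∑ H : SimpleGraph (Fin n), (if H.Adj i j then wt lam c H else 0) := by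
    rw [hsplitA, Finset.mul_sum]
    apply Finset.sum_le_sum
    intro H _
    by_cases h : H.Adj i j
    · rw [if_pos h, if_neg (fun hc => hc.1 h), mul_zero]
    · rw [if_neg h]
      by_cases hNC : ∀ l, ¬(H.Adj i l ∧ H.Adj j l)
      · rw [if_pos ⟨h, hNC⟩, wt, wt, edgeCount_sup_sg hij h,
          triCount_sup_of_no_common hij h hNC, pow_succ]
        exact le_of_eq (by ring)
      · rw [if_neg (fun hc => hNC hc.2), mul_zero]
        exact wt_nonneg hl hc0 _
  have hSS : (∑ H : SimpleGraph (Fin n), (if H.Adj i j then 0 else wt lam c H))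
      = ∑ H : SimpleGraph (Fin n), (if ¬ H.Adj i j then wt lam c H else 0) := by
    refine Finset.sum_congr rfl fun H _ => ?_
    by_cases h : H.Adj i j <;> simp [h]
  have hchain := chain_ineq hl hc0 hc1 hij (Finset.univ : Finset (Fin n))
  rw [Finset.card_univ, Fintype.card_fin] at hchain
  have huniv : (∑ H : SimpleGraph (Fin n),
        (if ¬ H.Adj i j ∧ ∀ l ∈ (Finset.univ : Finset (Fin n)), ¬(H.Adj i l ∧ H.Adj j l)
          then wt lam c H else 0))
      = ∑ H : SimpleGraph (Fin n),
          (if ¬ H.Adj i j ∧ ∀ l, ¬(H.Adj i l ∧ H.Adj j l) then wt lam c H else 0) := by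
    refine Finset.sum_congr rfl fun H _ => if_congr ?_ rfl rfl
    simp
  rw [huniv] at hchain
  calc lam/(1+lam) * ((1 + 2*lam)/(1+lam)^2) ^ n * (∑ H : SimpleGraph (Fin n), wt lam c H)
      ≤ lam/(1+lam) * ((1 + 2*lam)/(1+lam)^2) ^ n *
          ((1 + lam) * ∑ H : SimpleGraph (Fin n), (if H.Adj i j then 0 else wt lam c H)) :=
        mul_le_mul_of_nonneg_left hZle (by positivity)
    _ = lam * (((1 + 2*lam)/(1+lam)^2) ^ n *
          ∑ H : SimpleGraph (Fin n), (if ¬ H.Adj i j then wt lam c H else 0)) := by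
        rw [hSS]
        field_simp
    _ ≤ lam * ∑ H : SimpleGraph (Fin n),
          (if ¬ H.Adj i j ∧ ∀ l, ¬(H.Adj i l ∧ H.Adj j l) then wt lam c H else 0) :=
        mul_le_mul_of_nonneg_left hchain hl
    _ ≤ _ := hAge


lemma edgeCount_eq_sum (H : SimpleGraph (Fin n)) :
    (edgeCount H : ℝ) = ∑ q : Sym2 (Fin n), (if q ∈ H.edgeSet then (1:ℝ) else 0) := by
  have hfil : (Finset.univ.filter (fun q : Sym2 (Fin n) => q ∈ H.edgeSet))
      = H.edgeSet.toFinset := by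
    ext q
    simp
  rw [Finset.sum_boole, hfil]
  norm_cast
  rw [edgeCount_eq_ncard, Set.ncard_eq_toFinset_card']

lemma one_le_Z {lam c : ℝ} (hl : 0 ≤ lam) (hc0 : 0 ≤ c) :
    (1:ℝ) ≤ ∑ H : SimpleGraph (Fin n), wt lam c H := by
  have he : edgeCount (⊥ : SimpleGraph (Fin n)) = 0 := by
    rw [edgeCount_eq_ncard]
    simp
  have htset : triSet (⊥ : SimpleGraph (Fin n)) = ∅ := by
    ext s
    simp only [triSet, Set.mem_setOf_eq, Set.mem_empty_iff_false, iff_false]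
    intro hs
    have hcard : 1 < s.card := by rw [hs.card_eq]; norm_num
    obtain ⟨a, ha, b, hb, hab⟩ := Finset.one_lt_card.1 hcard
    exact hs.isClique ha hb hab
  have ht : triCount (⊥ : SimpleGraph (Fin n)) = 0 := by
    rw [triCount_eq, htset, Set.ncard_empty]
  have hbot : wt lam c (⊥ : SimpleGraph (Fin n)) = 1 := by
    rw [wt, he, ht, pow_zero, pow_zero, mul_one]
  calc (1:ℝ) = wt lam c (⊥ : SimpleGraph (Fin n)) := hbot.symm
    _ ≤ ∑ H : SimpleGraph (Fin n), wt lam c H :=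
        Finset.single_le_sum (fun H _ => wt_nonneg hl hc0 H) (Finset.mem_univ _)

lemma main_bound (n : ℕ) {lam c : ℝ} (hl : 0 ≤ lam) (hc0 : 0 ≤ c) (hc1 : c ≤ 1) :
    (n.choose 2 : ℝ) * (lam/(1+lam) * ((1 + 2*lam)/(1+lam)^2) ^ n *
        (∑ H : SimpleGraph (Fin n), wt lam c H))
      ≤ ∑ H : SimpleGraph (Fin n), (edgeCount H : ℝ) * wt lam c H := by
  classical
  have hnum : ∑ H : SimpleGraph (Fin n), (edgeCount H : ℝ) * wt lam c H
      = ∑ q : Sym2 (Fin n), ∑ H : SimpleGraph (Fin n),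
          (if q ∈ H.edgeSet then wt lam c H else 0) := by
    rw [Finset.sum_comm]
    refine Finset.sum_congr rfl fun H _ => ?_
    rw [edgeCount_eq_sum H, Finset.sum_mul]
    refine Finset.sum_congr rfl fun q _ => ?_
    by_cases h : q ∈ H.edgeSet <;> simp [h]
  rw [hnum]
  set B : ℝ := lam/(1+lam) * ((1 + 2*lam)/(1+lam)^2) ^ n *
    (∑ H : SimpleGraph (Fin n), wt lam c H) with hBdef
  have hsub : ∑ q ∈ Finset.univ.filter (fun q : Sym2 (Fin n) => ¬ q.IsDiag),
        (∑ H : SimpleGraph (Fin n), (if q ∈ H.edgeSet then wt lam c H else 0))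
      ≤ ∑ q : Sym2 (Fin n), ∑ H : SimpleGraph (Fin n),
          (if q ∈ H.edgeSet then wt lam c H else 0) := by
    apply Finset.sum_le_sum_of_subset_of_nonneg (Finset.filter_subset _ _)
    intro q _ _
    apply Finset.sum_nonneg
    intro H _
    split
    · exact wt_nonneg hl hc0 H
    · exact le_refl 0
  have hcard : (Finset.univ.filter (fun q : Sym2 (Fin n) => ¬ q.IsDiag)).card
      = n.choose 2 := by
    rw [← Fintype.card_subtype, Sym2.card_subtype_not_diag, Fintype.card_fin]
  have hper : ∀ q ∈ Finset.univ.filter (fun q : Sym2 (Fin n) => ¬ q.IsDiag),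
      B ≤ ∑ H : SimpleGraph (Fin n), (if q ∈ H.edgeSet then wt lam c H else 0) := by
    intro q hq
    rw [Finset.mem_filter] at hq
    induction q using Sym2.inductionOn with
    | hf i j =>
      have hij : i ≠ j := by
        intro h
        exact hq.2 (by rw [h]; exact Sym2.mk_isDiag_iff.2 rfl)
      have heq : ∀ H : SimpleGraph (Fin n),
          (if s(i,j) ∈ H.edgeSet then wt lam c H else 0)
            = (if H.Adj i j then wt lam c H else 0) := by
        intro H
        exact if_congr (SimpleGraph.mem_edgeSet H) rfl rfl
      rw [Finset.sum_congr rfl (fun H _ => heq H)]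
      exact pair_bound hl hc0 hc1 hij
  calc (n.choose 2 : ℝ) * B
      = (Finset.univ.filter (fun q : Sym2 (Fin n) => ¬ q.IsDiag)).card • B := by
        rw [hcard, nsmul_eq_mul]
    _ ≤ ∑ q ∈ Finset.univ.filter (fun q : Sym2 (Fin n) => ¬ q.IsDiag),
          (∑ H : SimpleGraph (Fin n), (if q ∈ H.edgeSet then wt lam c H else 0)) :=
        Finset.card_nsmul_le_sum _ _ _ hper
    _ ≤ _ := hsub


end GibbsAux

/-- **Lemma (lower bound on the expected number of edges under `μ_{λ,ζ}`).** -/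
theorem gibbs_expected_edges_lower_bound
    (n : ℕ) (hn : 1 ≤ n) (lam zeta : ℝ) (hlam : 0 ≤ lam)
    (hzeta : zeta ∈ Set.Icc (0 : ℝ) 1) :
    (n.choose 2 : ℝ) * (lam / (1 + lam)) * (1 - (lam / (1 + lam)) ^ 2) ^ n ≤
      gibbsExp n lam zeta (fun G => (edgeCount G : ℝ)) := by
  classical
  have hc0 : (0:ℝ) ≤ 1 - zeta := by linarith [hzeta.2]
  have hc1 : (1:ℝ) - zeta ≤ 1 := by linarith [hzeta.1]
  have hgw : ∀ G : SimpleGraph (Fin n), gibbsWeight lam zeta G = GibbsAux.wt lam (1 - zeta) G :=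
    fun G => rfl
  have hZeq : Zfun n lam zeta = ∑ H : SimpleGraph (Fin n), GibbsAux.wt lam (1 - zeta) H := by
    rw [Zfun]
    exact Finset.sum_congr rfl fun H _ => hgw H
  have hZ1 : (1:ℝ) ≤ Zfun n lam zeta := by
    rw [hZeq]
    exact GibbsAux.one_le_Z hlam hc0
  have hZpos : (0:ℝ) < Zfun n lam zeta := lt_of_lt_of_le one_pos hZ1
  rw [gibbsExp, le_div_iff₀ hZpos]
  have hr : 1 - (lam/(1+lam))^2 = (1 + 2*lam)/(1+lam)^2 := by
    have h1p : (0:ℝ) < 1 + lam := by linarith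
    field_simp
    ring
  have hmain := GibbsAux.main_bound n hlam hc0 hc1
  have hnumeq : ∑ G : SimpleGraph (Fin n), (edgeCount G : ℝ) * gibbsWeight lam zeta G
      = ∑ H : SimpleGraph (Fin n), (edgeCount H : ℝ) * GibbsAux.wt lam (1 - zeta) H :=
    Finset.sum_congr rfl fun H _ => by rw [hgw H]
  calc (n.choose 2 : ℝ) * (lam / (1 + lam)) * (1 - (lam / (1 + lam)) ^ 2) ^ n * Zfun n lam zeta
      = (n.choose 2 : ℝ) * (lam/(1+lam) * ((1 + 2*lam)/(1+lam)^2) ^ n *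
          (∑ H : SimpleGraph (Fin n), GibbsAux.wt lam (1 - zeta) H)) := by
        rw [hr, hZeq]
        ring
    _ ≤ ∑ H : SimpleGraph (Fin n), (edgeCount H : ℝ) * GibbsAux.wt lam (1 - zeta) H := hmain
    _ = ∑ G : SimpleGraph (Fin n), (edgeCount G : ℝ) * gibbsWeight lam zeta G := hnumeq.symm
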